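/- Every Borel subset of κ^ω is U-measurable. -/

import Mathlib

universe u

namespace UMeas

variable {A : Type u}

/-- The first `n` values of an infinite sequence, as a list. -/
def seg (s : ℕ → A) (n : ℕ) : List A := List.ofFn (fun i : Fin n => s i)

/-- `T` is a `U`-branching tree: a set of finite sequences closed under initial
segments, containing the empty sequence, whose branching sets are in `U`. -/
def IsUTree (U : Ultrafilter A) (T : Set (List A)) : Prop :=
  ([] ∈ T) ∧ (∀ σ ∈ T, ∀ τ : List A, τ <+: σ → τ ∈ T) ∧
    ∀ σ ∈ T, {a : A | σ ++ [a] ∈ T} ∈ U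

/-- The set of infinite branches through `T`. -/
def branches (T : Set (List A)) : Set (ℕ → A) := {s | ∀ n, seg s n ∈ T}

/-- Concatenation `σ⌢s` of a finite sequence with an infinite sequence. -/
def app (σ : List A) (s : ℕ → A) : ℕ → A :=
  fun n => if h : n < σ.length then σ.get ⟨n, h⟩ else s (n - σ.length)

/-- The section `X↾σ = {s | σ⌢s ∈ X}`. -/
def sect (X : Set (ℕ → A)) (σ : List A) : Set (ℕ → A) := {s | app σ s ∈ X}

def ULarge (U : Ultrafilter A) (X : Set (ℕ → A)) : Prop :=
  ∃ T, IsUTree U T ∧ branches T ⊆ X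

def USmall (U : Ultrafilter A) (X : Set (ℕ → A)) : Prop :=
  ∃ T, IsUTree U T ∧ branches T ∩ X = ∅

def UDetermined (U : Ultrafilter A) (X : Set (ℕ → A)) : Prop :=
  ULarge U X ∨ USmall U X

def UNull (U : Ultrafilter A) (X : Set (ℕ → A)) : Prop :=
  ∀ σ : List A, USmall U (sect X σ)

def UMeasurable (U : Ultrafilter A) (X : Set (ℕ → A)) : Prop :=
  ∀ σ : List A, UDetermined U (sect X σ)

section Lemmas

variable {U : Ultrafilter A} {X Y : Set (ℕ → A)} {σ τ : List A}

lemma length_seg (s : ℕ → A) (n : ℕ) : (seg s n).length = n := by simp [seg]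

lemma seg_add (s : ℕ → A) (n j : ℕ) :
    seg s (n + j) = seg s n ++ seg (fun k => s (n + k)) j := by
  simp [seg, List.ofFn_add]

lemma app_apply_lt (σ : List A) (s : ℕ → A) {n : ℕ} (h : n < σ.length) :
    app σ s n = σ.get ⟨n, h⟩ := dif_pos h

lemma app_apply_ge (σ : List A) (s : ℕ → A) {n : ℕ} (h : ¬ n < σ.length) :
    app σ s n = s (n - σ.length) := dif_neg h

lemma app_seg (s : ℕ → A) (n : ℕ) : app (seg s n) (fun k => s (n + k)) = s := by
  funext m
  by_cases h : m < (seg s n).length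
  · rw [app_apply_lt _ _ h]
    simp [seg]
  · rw [app_apply_ge _ _ h]
    rw [length_seg] at h ⊢
    congr 1
    omega

lemma app_app (σ τ : List A) (s : ℕ → A) : app σ (app τ s) = app (σ ++ τ) s := by
  funext n
  by_cases h1 : n < σ.length
  · rw [app_apply_lt _ _ h1, app_apply_lt (σ ++ τ) s (by simp; omega)]
    simp [List.getElem_append_left h1]
  · rw [app_apply_ge _ _ h1]
    by_cases h2 : n - σ.length < τ.length
    · rw [app_apply_lt _ _ h2, app_apply_lt (σ ++ τ) s (by simp; omega)]
      simp [List.getElem_append_right (show σ.length ≤ n by omega)]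
    · rw [app_apply_ge _ _ h2, app_apply_ge (σ ++ τ) s (by simp; omega)]
      congr 1
      simp
      omega

lemma sect_sect : sect (sect X σ) τ = sect X (σ ++ τ) := by
  ext s; simp only [sect, Set.mem_setOf_eq, app_app]

lemma sect_nil : sect X [] = X := by
  ext s
  simp only [sect, Set.mem_setOf_eq]
  have : app ([] : List A) s = s := by
    funext n; rw [app_apply_ge _ _ (by simp)]; simp
  rw [this]

lemma sect_compl : sect Xᶜ σ = (sect X σ)ᶜ := rfl

lemma sect_iUnion (f : ℕ → Set (ℕ → A)) : sect (⋃ n, f n) σ = ⋃ n, sect (f n) σ := by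
  ext s; simp [sect]

lemma isUTree_univ : IsUTree U (Set.univ : Set (List A)) :=
  ⟨trivial, fun _ _ _ _ => trivial, fun _ _ => U.univ_mem⟩

lemma uLarge_univ : ULarge U (Set.univ : Set (ℕ → A)) :=
  ⟨Set.univ, isUTree_univ, fun _ _ => trivial⟩

lemma uLarge_mono (h : ULarge U X) (hXY : X ⊆ Y) : ULarge U Y := by
  obtain ⟨T, hT, hb⟩ := h
  exact ⟨T, hT, hb.trans hXY⟩

lemma glue (h : {a | ULarge U (sect X [a])} ∈ U) : ULarge U X := by
  classical
  have hch : ∀ a : A, ∃ T, IsUTree U T ∧ (ULarge U (sect X [a]) → branches T ⊆ sect X [a]) := by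
    intro a
    by_cases ha : ULarge U (sect X [a])
    · obtain ⟨T, hT, hb⟩ := ha
      exact ⟨T, hT, fun _ => hb⟩
    · exact ⟨Set.univ, isUTree_univ, fun h' => absurd h' ha⟩
  choose Ta hTa hba using hch
  refine ⟨{l | l = [] ∨ ∃ a t, l = a :: t ∧ ULarge U (sect X [a]) ∧ t ∈ Ta a}, ⟨?_, ?_, ?_⟩, ?_⟩
  · exact Or.inl rfl
  · rintro l (rfl | ⟨a, t, rfl, ha, ht⟩) τ hpre
    · left; exact List.prefix_nil.1 hpre
    · rcases hpre with ⟨r, hr⟩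
      match τ, hr with
      | [], _ => exact Or.inl rfl
      | b :: τ', hr =>
        right
        obtain ⟨heq, h2⟩ : b = a ∧ τ' ++ r = t := by
          constructor <;> [exact (List.cons.injEq _ _ _ _ ▸ hr).1;
            exact (List.cons.injEq _ _ _ _ ▸ hr).2]
        subst heq
        exact ⟨b, τ', rfl, ha, (hTa b).2.1 t ht τ' ⟨r, h2⟩⟩
  · rintro l (rfl | ⟨a, t, rfl, ha, ht⟩)
    · refine U.sets_of_superset h ?_
      intro b hb
      exact Or.inr ⟨b, [], rfl, hb, (hTa b).1⟩
    · refine U.sets_of_superset ((hTa a).2.2 t ht) ?_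
      intro b hb
      exact Or.inr ⟨a, t ++ [b], rfl, ha, hb⟩
  · intro s hs
    have h1 := hs 1
    have h1' : seg s 1 = [s 0] := by simp [seg]
    rw [h1'] at h1
    rcases h1 with h1 | ⟨a, t, heq, ha, _⟩
    · simp at h1
    obtain ⟨rfl, -⟩ : s 0 = a ∧ t = [] := by
      constructor <;> [exact (List.cons.injEq _ _ _ _ ▸ heq).1;
        exact ((List.cons.injEq _ _ _ _ ▸ heq).2).symm]
    have htail : (fun k => s (1 + k)) ∈ branches (Ta (s 0)) := by
      intro j
      have hj := hs (1 + j)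
      rw [seg_add] at hj
      rw [h1'] at hj
      rcases hj with hj | ⟨b, t', heq', hb, ht'⟩
      · simp at hj
      · obtain ⟨rfl, rfl⟩ : s 0 = b ∧ seg (fun k => s (1 + k)) j = t' := by
          constructor <;> [exact (List.cons.injEq _ _ _ _ ▸ heq').1;
            exact (List.cons.injEq _ _ _ _ ▸ heq').2]
        exact ht'
    have hmem := hba (s 0) ha htail
    have happ : app [s 0] (fun k => s (1 + k)) = s := by
      have := app_seg s 1
      rwa [h1'] at this
    have hmem' : app [s 0] (fun k => s (1 + k)) ∈ X := hmem
    rwa [happ] at hmem'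

lemma step (h : ¬ ULarge U (sect X σ)) :
    {a | ¬ ULarge U (sect X (σ ++ [a]))} ∈ U := by
  by_contra hc
  rw [← Ultrafilter.compl_mem_iff_notMem] at hc
  apply h
  apply glue
  refine U.sets_of_superset hc ?_
  intro a ha
  simp only [Set.mem_compl_iff, Set.mem_setOf_eq, not_not] at ha
  show ULarge U (sect (sect X σ) [a])
  rwa [sect_sect]

lemma uSmall_iff_compl : USmall U X ↔ ULarge U Xᶜ := by
  unfold USmall ULarge
  refine exists_congr fun T => and_congr_right fun _ => ?_
  rw [Set.subset_compl_iff_disjoint_right, Set.disjoint_iff_inter_eq_empty]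

lemma uDetermined_compl (h : UDetermined U X) : UDetermined U Xᶜ := by
  rcases h with h | h
  · right
    rwa [uSmall_iff_compl, compl_compl]
  · left
    rwa [uSmall_iff_compl] at h

lemma prefix_concat_cases {a : A} (h : τ <+: σ ++ [a]) : τ = σ ++ [a] ∨ τ <+: σ := by
  obtain ⟨r, hr⟩ := h
  rcases List.eq_nil_or_concat r with rfl | ⟨r', b, rfl⟩
  · left; simpa using hr
  · right
    have h2 : (τ ++ r') ++ [b] = σ ++ [a] := by
      rw [← hr, List.concat_eq_append, List.append_assoc]
    have h3 := List.append_inj' h2 rfl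
    exact ⟨r', h3.1⟩

lemma app_seg_apply (s t : ℕ → A) {m i : ℕ} (h : i < m) : app (seg s m) t i = s i := by
  rw [app_apply_lt _ _ (show i < (seg s m).length by rw [length_seg]; exact h)]
  simp [seg]

lemma isUTree_nongood (h : ¬ ULarge U (sect X ([] : List A))) :
    IsUTree U {σ | ∀ τ, τ <+: σ → ¬ ULarge U (sect X τ)} := by
  refine ⟨?_, ?_, ?_⟩
  · intro τ hτ
    have := List.prefix_nil.1 hτ
    subst this
    exact h
  · intro σ hσ τ hτ ρ hρ
    exact hσ ρ (hρ.trans hτ)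
  · intro σ hσ
    refine U.sets_of_superset (step (hσ σ (List.prefix_refl σ))) ?_
    intro a ha τ hτ
    rcases prefix_concat_cases hτ with rfl | hpre
    · exact ha
    · exact hσ τ hpre

lemma uDetermined_of_isOpen [TopologicalSpace A] (hY : IsOpen Y) :
    UDetermined U Y := by
  by_cases h : ULarge U (sect Y [])
  · left; rwa [sect_nil] at h
  right
  refine ⟨{σ | ∀ τ, τ <+: σ → ¬ ULarge U (sect Y τ)}, isUTree_nongood h,
    Set.eq_empty_iff_forall_notMem.2 ?_⟩
  rintro s ⟨hsb, hsY⟩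
  obtain ⟨I, u, hu, hsub⟩ := isOpen_pi_iff.1 hY s hsY
  set m := I.sup id + 1 with hm
  have hlarge : ULarge U (sect Y (seg s m)) := by
    refine uLarge_mono uLarge_univ ?_
    intro t _
    show app (seg s m) t ∈ Y
    apply hsub
    intro i hi
    have him : i < m := Nat.lt_succ_of_le (Finset.le_sup (f := id) hi)
    rw [app_seg_apply s t him]
    exact (hu i hi).2
  exact (hsb m) (seg s m) (List.prefix_refl _) hlarge

lemma uDetermined_iUnion (f : ℕ → Set (ℕ → A)) (hf : ∀ n, UMeasurable U (f n)) :
    UDetermined U (⋃ n, f n) := by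
  classical
  set X := ⋃ n, f n with hXdef
  by_cases hL : ULarge U (sect X [])
  · left; rwa [sect_nil] at hL
  right
  have h1 : ∀ (n : ℕ) (σ : List A), ∃ T, IsUTree U T ∧
      (¬ ULarge U (sect X σ) → branches T ∩ sect (f n) σ = ∅) := by
    intro n σ
    by_cases h : ULarge U (sect X σ)
    · exact ⟨Set.univ, isUTree_univ, fun h' => absurd h h'⟩
    · have hnl : ¬ ULarge U (sect (f n) σ) := fun hl =>
        h (uLarge_mono hl (fun t ht => Set.mem_iUnion.2 ⟨n, ht⟩))
      rcases (hf n σ).resolve_left hnl with ⟨T, hT, hT2⟩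
      exact ⟨T, hT, fun _ => hT2⟩
  choose S hS1 hS2 using h1
  set T : Set (List A) := {σ | (∀ τ, τ <+: σ → ¬ ULarge U (sect X τ)) ∧
    ∀ n ≤ σ.length, σ.drop n ∈ S n (σ.take n)} with hTdef
  have hTtree : IsUTree U T := by
    refine ⟨⟨?_, ?_⟩, ?_, ?_⟩
    · intro τ hτ
      have := List.prefix_nil.1 hτ
      subst this
      exact hL
    · intro n hn
      have : n = 0 := Nat.le_zero.1 hn
      subst this
      simpa using (hS1 0 []).1
    · rintro σ ⟨hng, hdrop⟩ τ hτ
      refine ⟨fun ρ hρ => hng ρ (hρ.trans hτ), fun n hn => ?_⟩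
      have htake : τ.take n = σ.take n := by
        obtain ⟨r, rfl⟩ := hτ
        rw [List.take_append_of_le_length hn]
      have hdropp : τ.drop n <+: σ.drop n := by
        obtain ⟨r, rfl⟩ := hτ
        rw [List.drop_append_of_le_length hn]
        exact ⟨r, rfl⟩
      rw [htake]
      exact (hS1 n (σ.take n)).2.1 _ (hdrop n (hn.trans hτ.length_le)) _ hdropp
    · rintro σ ⟨hng, hdrop⟩
      have hW : ({a | ¬ ULarge U (sect X (σ ++ [a]))} ∩
          ⋂ n ∈ Finset.range (σ.length + 1),
            {a | σ.drop n ++ [a] ∈ S n (σ.take n)}) ∈ U := by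
        refine Filter.inter_mem (step (hng σ (List.prefix_refl σ))) ?_
        refine (Filter.biInter_finset_mem _).2 ?_
        intro n hn
        rw [Finset.mem_range] at hn
        exact (hS1 n (σ.take n)).2.2 _ (hdrop n (Nat.lt_succ_iff.1 hn))
      refine U.sets_of_superset hW ?_
      rintro a ⟨ha1, ha2⟩
      simp only [Set.mem_iInter, Set.mem_setOf_eq, Finset.mem_range] at ha2
      refine ⟨?_, ?_⟩
      · intro τ hτ
        rcases prefix_concat_cases hτ with rfl | hpre
        · exact ha1
        · exact hng τ hpre
      · intro n hn
        rw [List.length_append, List.length_singleton] at hn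
        by_cases hcase : n ≤ σ.length
        · rw [List.drop_append_of_le_length hcase, List.take_append_of_le_length hcase]
          exact ha2 n (Nat.lt_succ_of_le hcase)
        · have heq : n = σ.length + 1 := by omega
          subst heq
          have hd : (σ ++ [a]).drop (σ.length + 1) = [] := by simp
          rw [hd]
          exact (hS1 _ _).1
  refine ⟨T, hTtree, Set.eq_empty_iff_forall_notMem.2 ?_⟩
  rintro s ⟨hsb, hsX⟩
  obtain ⟨n, hn⟩ := Set.mem_iUnion.1 hsX
  have htail : (fun k => s (n + k)) ∈ branches (S n (seg s n)) := by
    intro j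
    have hj := (hsb (n + j)).2 n (by rw [length_seg]; omega)
    rw [seg_add s n j] at hj
    rwa [List.take_left' (length_seg s n), List.drop_left' (length_seg s n)] at hj
  have hng : ¬ ULarge U (sect X (seg s n)) := (hsb n).1 _ (List.prefix_refl _)
  have hdisj := hS2 n (seg s n) hng
  have hmem : (fun k => s (n + k)) ∈ sect (f n) (seg s n) := by
    show app (seg s n) (fun k => s (n + k)) ∈ f n
    rwa [app_seg]
  exact Set.eq_empty_iff_forall_notMem.1 hdisj _ ⟨htail, hmem⟩

lemma continuous_app [TopologicalSpace A] (σ : List A) :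
    Continuous fun s : ℕ → A => app σ s := by
  refine continuous_pi fun n => ?_
  by_cases h : n < σ.length
  · simp only [app, dif_pos h]
    exact continuous_const
  · simp only [app, dif_neg h]
    exact continuous_apply _

end Lemmas

end UMeas

theorem stmt5 {A : Type u} [TopologicalSpace A] [DiscreteTopology A]
    (U : Ultrafilter A) (X : Set (ℕ → A))
    (hX : @MeasurableSet _ (borel (ℕ → A)) X) :
    UMeas.UMeasurable U X := by
  have hX' : @MeasurableSet (ℕ → A) (MeasurableSpace.generateFrom {s : Set (ℕ → A) | IsOpen s}) X := hX
  induction X, hX' using MeasurableSpace.generateFrom_induction with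
  | hC t ht _ =>
    intro σ
    exact UMeas.uDetermined_of_isOpen (IsOpen.preimage (UMeas.continuous_app σ) ht)
  | empty =>
    intro σ
    right
    refine ⟨Set.univ, UMeas.isUTree_univ, ?_⟩
    have : UMeas.sect (∅ : Set (ℕ → A)) σ = ∅ := rfl
    rw [this, Set.inter_empty]
  | compl t ht hp =>
    intro σ
    rw [UMeas.sect_compl]
    exact UMeas.uDetermined_compl (hp ht σ)
  | iUnion g hg hp =>
    intro σ
    rw [UMeas.sect_iUnion]
    apply UMeas.uDetermined_iUnion
    intro n τ
    rw [UMeas.sect_sect]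
    exact hp n (hg n) (σ ++ τ)
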